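/- The algebra NCQSym is freely generated by the elements {Q_Φ : Φ atomic set composition}. -/

import Mathlib

open scoped Classical
noncomputable section

/-- The ground set `[n] = {1, …, n}`. -/
def ground (n : ℕ) : Finset ℕ := Finset.Icc 1 n

/-- `A` is a set partition of `[n]`. -/
def IsSetPartition (n : ℕ) (A : Finset (Finset ℕ)) : Prop :=
  (∀ B ∈ A, B.Nonempty) ∧
  (∀ B ∈ A, ∀ C ∈ A, B ≠ C → Disjoint B C) ∧
  A.sup id = ground n

/-- Shift every entry of every part by `n`. -/
def shiftP (n : ℕ) (A : Finset (Finset ℕ)) : Finset (Finset ℕ) :=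
  A.image (fun B => B.image (· + n))

/-- Shifted concatenation `A|B` of a set partition `A ⊢ [n]` with `B`. -/
def concatP (n : ℕ) (A B : Finset (Finset ℕ)) : Finset (Finset ℕ) :=
  A ∪ shiftP n B

/-- `A` is an atomic set partition of `[n]`: nonempty and not a nontrivial
shifted concatenation. -/
def AtomicP (n : ℕ) (A : Finset (Finset ℕ)) : Prop :=
  IsSetPartition n A ∧ 0 < n ∧
  ¬ ∃ k B C, 0 < k ∧ k < n ∧ IsSetPartition k B ∧ IsSetPartition (n - k) C ∧
      A = concatP k B C

/-- Shifted concatenation of a list of (size, set partition) pairs. -/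
def concatListP : List (ℕ × Finset (Finset ℕ)) → ℕ × Finset (Finset ℕ)
  | [] => (0, ∅)
  | p :: L => ((concatListP L).1 + p.1, concatP p.1 p.2 (concatListP L).2)

/-- `L` is the atomic factorization `A^!` of the set partition `A ⊢ [n]`. -/
def AtomicFactorization (n : ℕ) (A : Finset (Finset ℕ))
    (L : List (ℕ × Finset (Finset ℕ))) : Prop :=
  (∀ p ∈ L, AtomicP p.1 p.2) ∧ concatListP L = (n, A)

/-- The Bell number: the number of set partitions of `[n]`. -/
def bell (n : ℕ) : ℕ := Nat.card {A : Finset (Finset ℕ) // IsSetPartition n A}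

/-- Stirling numbers of the second kind: set partitions of `[n]` into `k` parts. -/
def stirling2 (n k : ℕ) : ℕ :=
  Nat.card {A : Finset (Finset ℕ) // IsSetPartition n A ∧ A.card = k}

/-- The number of atomic set partitions of `[n]` into `k` parts. -/
def atomCount (n k : ℕ) : ℕ :=
  Nat.card {A : Finset (Finset ℕ) // AtomicP n A ∧ A.card = k}

/-- The number of atomic set partitions of `[n]`. -/
def atomCount' (n : ℕ) : ℕ := Nat.card {A : Finset (Finset ℕ) // AtomicP n A}

/-- Refinement order: `A ≤ B` iff every part of `A` is contained in a part of `B`. -/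
def refines (A B : Finset (Finset ℕ)) : Prop := ∀ a ∈ A, ∃ b ∈ B, a ⊆ b

/-- The meet `A ∧ B` of two set partitions. -/
def meetP (A B : Finset (Finset ℕ)) : Finset (Finset ℕ) :=
  ((A ×ˢ B).image fun p => p.1 ∩ p.2).filter (·.Nonempty)

/-- The set partition `{[n]}` with a single part (empty if `n = 0`). -/
def onePartP (n : ℕ) : Finset (Finset ℕ) := if n = 0 then ∅ else {ground n}

/-- The finite set of set partitions of `[n]` satisfying a predicate `P`. -/
def SPs (n : ℕ) (P : Finset (Finset ℕ) → Prop) : Finset (Finset (Finset ℕ)) :=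
  (ground n).powerset.powerset.filter fun A => IsSetPartition n A ∧ P A

/-- Covering relation for `≤_*`: `B` covers `A` if `B` is obtained from `A` by merging two
parts `a, a'` with every element of `a` smaller than every element of `a'`. -/
def coverStar (A B : Finset (Finset ℕ)) : Prop :=
  ∃ a ∈ A, ∃ a' ∈ A, a ≠ a' ∧ (∀ x ∈ a, ∀ y ∈ a', x < y) ∧
    B = insert (a ∪ a') ((A.erase a).erase a')

/-- The order `≤_*` on set partitions. -/
def leStar : Finset (Finset ℕ) → Finset (Finset ℕ) → Prop :=
  Relation.ReflTransGen coverStar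

/-- Restriction `A↓_S` of a set partition to the entries in `S`. -/
def restrictP (A : Finset (Finset ℕ)) (S : Finset ℕ) : Finset (Finset ℕ) :=
  (A.image (· ∩ S)).filter (·.Nonempty)

/-- The standardization map of a finite set `S`: sends the `i`-th smallest element of `S`
to `i` (1-indexed). -/
def stMap (S : Finset ℕ) (x : ℕ) : ℕ := (S.filter (· ≤ x)).card

/-- Standardization of a set partition: relabel its entries to `{1,…,m}` preserving order. -/
def stdP (A : Finset (Finset ℕ)) : Finset (Finset ℕ) :=
  A.image fun b => b.image (stMap (A.sup id))

/-- The map raising `{1,…,|S|}` order-preservingly onto `S`. -/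
def raiseMap (S : Finset ℕ) (x : ℕ) : ℕ := (S.sort (· ≤ ·)).getD (x - 1) 0

/-- `A↑_S`: raise the entries of `A` order-preservingly so the ground set becomes `S`. -/
def raiseP (S : Finset ℕ) (A : Finset (Finset ℕ)) : Finset (Finset ℕ) :=
  A.image fun b => b.image (raiseMap S)

/-- `IsShuffle l₁ l₂ l`: `l` is a shuffle (interleaving) of `l₁` and `l₂`. -/
inductive IsShuffle {α : Type*} : List α → List α → List α → Prop
  | nil : IsShuffle [] [] []
  | left {a : α} {l₁ l₂ l : List α} : IsShuffle l₁ l₂ l → IsShuffle (a :: l₁) l₂ (a :: l)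
  | right {a : α} {l₁ l₂ l : List α} : IsShuffle l₁ l₂ l → IsShuffle l₁ (a :: l₂) (a :: l)

/-- A word is Lyndon if it is nonempty and lexicographically strictly smaller than all of
its proper cyclic rotations. -/
def LyndonWord {α : Type*} (lt : α → α → Prop) (w : List α) : Prop :=
  w ≠ [] ∧ ∀ i, 0 < i → i < w.length → List.Lex lt w (w.rotate i)

/-- A set partition is Lyndon (with respect to a total order `lt` on atomic set partitions)
if its atomic factorization is a Lyndon word. -/
def LyndonPartition (lt : ℕ × Finset (Finset ℕ) → ℕ × Finset (Finset ℕ) → Prop)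
    (n : ℕ) (A : Finset (Finset ℕ)) : Prop :=
  ∃ L, AtomicFactorization n A L ∧ LyndonWord lt L

/-! ### Set compositions -/

/-- `Φ` is a set composition of `[n]`: an ordered sequence of nonempty pairwise disjoint
sets whose union is `[n]`. -/
def IsSetComposition (n : ℕ) (Φ : List (Finset ℕ)) : Prop :=
  (∀ B ∈ Φ, B.Nonempty) ∧ Φ.Pairwise Disjoint ∧ Φ.foldr (· ∪ ·) ∅ = ground n

/-- Shift every entry of every part of a set composition by `n`. -/
def shiftC (n : ℕ) (Φ : List (Finset ℕ)) : List (Finset ℕ) :=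
  Φ.map (·.image (· + n))

/-- Shifted concatenation `Φ|Ψ` of set compositions, `Φ ⊨ [n]`. -/
def concatC (n : ℕ) (Φ Ψ : List (Finset ℕ)) : List (Finset ℕ) := Φ ++ shiftC n Ψ

/-- An atomic set composition: nonempty and not a nontrivial shifted concatenation. -/
def AtomicC (n : ℕ) (Φ : List (Finset ℕ)) : Prop :=
  IsSetComposition n Φ ∧ 0 < n ∧
  ¬ ∃ k Ψ Γ, 0 < k ∧ k < n ∧ IsSetComposition k Ψ ∧ IsSetComposition (n - k) Γ ∧
      Φ = concatC k Ψ Γ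

/-- Shifted concatenation of a list of (size, set composition) pairs. -/
def concatListC : List (ℕ × List (Finset ℕ)) → ℕ × List (Finset ℕ)
  | [] => (0, [])
  | p :: L => ((concatListC L).1 + p.1, concatC p.1 p.2 (concatListC L).2)

/-- `L` is the atomic factorization `Φ^!` of the set composition `Φ ⊨ [n]`. -/
def AtomicFactorizationC (n : ℕ) (Φ : List (Finset ℕ))
    (L : List (ℕ × List (Finset ℕ))) : Prop :=
  (∀ p ∈ L, AtomicC p.1 p.2) ∧ concatListC L = (n, Φ)

/-- Covering relation for `≤_*` on set compositions: merge two adjacent parts `a, b` with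
every element of `a` smaller than every element of `b`. -/
def coverStarC (Φ Ψ : List (Finset ℕ)) : Prop :=
  ∃ L₁ a b L₂, Φ = L₁ ++ a :: b :: L₂ ∧ (∀ x ∈ a, ∀ y ∈ b, x < y) ∧
    Ψ = L₁ ++ (a ∪ b) :: L₂

/-- The order `≤_*` on set compositions. -/
def leStarC : List (Finset ℕ) → List (Finset ℕ) → Prop :=
  Relation.ReflTransGen coverStarC

/-- The meet operation `Φ ∧ Ψ` on set compositions: the nonempty intersections
`Φ_i ∩ Ψ_j` in lexicographic order of `(i, j)`. -/
def meetC (Φ Ψ : List (Finset ℕ)) : List (Finset ℕ) :=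
  (Φ.flatMap fun a => Ψ.map fun b => a ∩ b).filter (·.Nonempty)

/-- The one-part set composition `([n])` (empty if `n = 0`). -/
def onePartC (n : ℕ) : List (Finset ℕ) := if n = 0 then [] else [ground n]

/-- Lists of length `k` with all entries in `s`. -/
def listsOfLen (s : Finset (Finset ℕ)) : ℕ → Finset (List (Finset ℕ))
  | 0 => {[]}
  | k + 1 => (s ×ˢ listsOfLen s k).image fun p => p.1 :: p.2

/-- The finite set of set compositions of `[n]` satisfying a predicate `P`. -/
def SCs (n : ℕ) (P : List (Finset ℕ) → Prop) : Finset (List (Finset ℕ)) :=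
  ((Finset.range (n + 1)).biUnion fun k => listsOfLen (ground n).powerset k).filter
    fun Φ => IsSetComposition n Φ ∧ P Φ

/-- `Φ↑_S`: raise the entries of a set composition order-preservingly into `S`. -/
def raiseC (S : Finset ℕ) (Φ : List (Finset ℕ)) : List (Finset ℕ) :=
  Φ.map (·.image (raiseMap S))

/-- Standardization of a set composition. -/
def stdC (Φ : List (Finset ℕ)) : List (Finset ℕ) :=
  Φ.map (·.image (stMap (Φ.foldr (· ∪ ·) ∅)))

/-- `α(Φ)`: the composition of part sizes of `Φ`. -/
def alphaC (Φ : List (Finset ℕ)) : List ℕ := Φ.map Finset.card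

/-- The order `≤_#` on set compositions: `Φ ≤_# Ψ` iff `α(Φ) = α(Ψ)` and each atomic factor
of `Φ` is the standardization of the corresponding consecutive block of parts of `Ψ`. -/
def leSharp (Φ Ψ : List (Finset ℕ)) : Prop :=
  alphaC Φ = alphaC Ψ ∧
  ∃ (L : List (ℕ × List (Finset ℕ))) (Bs : List (List (Finset ℕ))),
    (∀ p ∈ L, AtomicC p.1 p.2) ∧ (concatListC L).2 = Φ ∧
    Ψ = Bs.flatten ∧ List.Forall₂ (fun b (l : ℕ × List (Finset ℕ)) => stdC b = l.2) Bs L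

/-! ### Index types -/

/-- Set partitions with their sizes. -/
abbrev SPIdx := {x : ℕ × Finset (Finset ℕ) // IsSetPartition x.1 x.2}

/-- Atomic set partitions with their sizes. -/
abbrev AtomIdx := {x : ℕ × Finset (Finset ℕ) // AtomicP x.1 x.2}

/-- Set compositions with their sizes. -/
abbrev SCIdx := {x : ℕ × List (Finset ℕ) // IsSetComposition x.1 x.2}

/-- Atomic set compositions with their sizes. -/
abbrev AtomCIdx := {x : ℕ × List (Finset ℕ) // AtomicC x.1 x.2}


namespace NCQ

/-- Union of the parts of a list of finsets. -/
def U (Φ : List (Finset ℕ)) : Finset ℕ := Φ.foldr (· ∪ ·) ∅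

@[simp] lemma U_nil : U [] = ∅ := rfl
@[simp] lemma U_cons (p : Finset ℕ) (L : List (Finset ℕ)) : U (p :: L) = p ∪ U L := rfl

lemma U_append (l₁ l₂ : List (Finset ℕ)) : U (l₁ ++ l₂) = U l₁ ∪ U l₂ := by
  induction l₁ with
  | nil => simp
  | cons p L ih => simp [ih, Finset.union_assoc]

lemma mem_U {x : ℕ} {Φ : List (Finset ℕ)} : x ∈ U Φ ↔ ∃ p ∈ Φ, x ∈ p := by
  induction Φ with
  | nil => simp
  | cons p L ih => simp [ih]

lemma subset_U {p : Finset ℕ} {Φ : List (Finset ℕ)} (hp : p ∈ Φ) : p ⊆ U Φ :=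
  fun x hx => mem_U.2 ⟨p, hp, hx⟩

lemma disjoint_U {p : Finset ℕ} {L : List (Finset ℕ)} (h : ∀ q ∈ L, Disjoint p q) :
    Disjoint p (U L) := by
  induction L with
  | nil => simp
  | cons q L ih =>
    simp only [U_cons, Finset.disjoint_union_right]
    exact ⟨h q (by simp), ih fun q hq => h q (by simp [hq])⟩

lemma mem_ground {x n : ℕ} : x ∈ ground n ↔ 1 ≤ x ∧ x ≤ n := Finset.mem_Icc

@[simp] lemma card_ground (n : ℕ) : (ground n).card = n := by
  simp [ground]

lemma sc_U {n : ℕ} {Φ : List (Finset ℕ)} (h : IsSetComposition n Φ) : U Φ = ground n := h.2.2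

lemma sc_part_subset {n : ℕ} {Φ : List (Finset ℕ)} (h : IsSetComposition n Φ) {c : Finset ℕ}
    (hc : c ∈ Φ) : c ⊆ ground n := (subset_U hc).trans (le_of_eq (sc_U h))

lemma isSC_zero {Φ : List (Finset ℕ)} (h : IsSetComposition 0 Φ) : Φ = [] := by
  cases Φ with
  | nil => rfl
  | cons p L =>
    exfalso
    obtain ⟨x, hx⟩ := h.1 p (by simp)
    have := sc_part_subset h (by simp : p ∈ p :: L) hx
    simp [ground] at this

lemma isSC_nil : IsSetComposition 0 [] := by
  refine ⟨by simp, by simp, ?_⟩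
  simp [ground]

lemma card_U {Φ : List (Finset ℕ)} (h : Φ.Pairwise Disjoint) :
    (U Φ).card = (Φ.map Finset.card).sum := by
  induction Φ with
  | nil => simp
  | cons p L ih =>
    rw [List.pairwise_cons] at h
    rw [U_cons, Finset.card_union_of_disjoint (disjoint_U h.1), ih h.2]
    simp

lemma length_le_sum {α : Type*} {f : α → ℕ} {l : List α} (h : ∀ x ∈ l, 1 ≤ f x) :
    l.length ≤ (l.map f).sum := by
  induction l with
  | nil => simp
  | cons a l ih =>
    simp only [List.length_cons, List.map_cons, List.sum_cons]
    have := h a (by simp)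
    have := ih fun x hx => h x (by simp [hx])
    omega

lemma sc_length_le {n : ℕ} {Φ : List (Finset ℕ)} (h : IsSetComposition n Φ) : Φ.length ≤ n := by
  have h1 : (U Φ).card = n := by rw [sc_U h]; simp
  have h2 := card_U h.2.1
  have h3 := length_le_sum (f := Finset.card) (l := Φ) fun x hx =>
    Finset.card_pos.2 (h.1 x hx)
  omega

lemma mem_listsOfLen {s : Finset (Finset ℕ)} {k : ℕ} {Φ : List (Finset ℕ)} :
    Φ ∈ listsOfLen s k ↔ Φ.length = k ∧ ∀ p ∈ Φ, p ∈ s := by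
  induction k generalizing Φ with
  | zero => cases Φ <;> simp [listsOfLen]
  | succ k ih =>
    cases Φ with
    | nil =>
      simp only [listsOfLen, Finset.mem_image, Finset.mem_product]
      constructor
      · rintro ⟨⟨a, b⟩, _, h⟩; simp at h
      · rintro ⟨h, -⟩; simp at h
    | cons a L =>
      simp only [listsOfLen, Finset.mem_image, Finset.mem_product]
      constructor
      · rintro ⟨⟨b, T⟩, ⟨hb, hT⟩, h⟩
        injection h with h1 h2
        subst h1; subst h2
        obtain ⟨hlen, hmem⟩ := ih.1 hT
        refine ⟨by simp [hlen], ?_⟩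
        intro p hp
        rcases List.mem_cons.1 hp with rfl | hp
        · exact hb
        · exact hmem p hp
      · rintro ⟨hlen, hmem⟩
        refine ⟨(a, L), ⟨hmem a (by simp), ih.2 ⟨by simpa using hlen, fun p hp => hmem p (by simp [hp])⟩⟩, rfl⟩

lemma mem_SCs {n : ℕ} {P : List (Finset ℕ) → Prop} {Φ : List (Finset ℕ)} :
    Φ ∈ SCs n P ↔ IsSetComposition n Φ ∧ P Φ := by
  constructor
  · intro h
    exact (Finset.mem_filter.1 h).2
  · intro h
    refine Finset.mem_filter.2 ⟨?_, h⟩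
    refine Finset.mem_biUnion.2 ⟨Φ.length, ?_, ?_⟩
    · simp only [Finset.mem_range]
      exact Nat.lt_succ_of_le (sc_length_le h.1)
    · exact mem_listsOfLen.2 ⟨rfl, fun p hp => Finset.mem_powerset.2 (sc_part_subset h.1 hp)⟩

/-! shift and concat -/

lemma U_shiftC (n : ℕ) (Ψ : List (Finset ℕ)) : U (shiftC n Ψ) = (U Ψ).image (· + n) := by
  induction Ψ with
  | nil => simp [shiftC]
  | cons p L ih => simp [shiftC, Finset.image_union] at *; rw [ih]

lemma shiftC_shiftC (a b : ℕ) (Φ : List (Finset ℕ)) :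
    shiftC a (shiftC b Φ) = shiftC (b + a) Φ := by
  simp only [shiftC, List.map_map]
  congr 1
  funext c
  simp [Finset.image_image, Function.comp, add_assoc]

lemma shiftC_append (n : ℕ) (l₁ l₂ : List (Finset ℕ)) :
    shiftC n (l₁ ++ l₂) = shiftC n l₁ ++ shiftC n l₂ := by simp [shiftC]

lemma concatC_assoc (j l : ℕ) (P Q R : List (Finset ℕ)) :
    concatC (j + l) (concatC j P Q) R = concatC j P (concatC l Q R) := by
  simp only [concatC, shiftC_append, List.append_assoc, shiftC_shiftC]
  rw [Nat.add_comm l j]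

lemma shiftC_injective (n : ℕ) : Function.Injective (shiftC n) := by
  have himg : Function.Injective (fun b : Finset ℕ => b.image (· + n)) := by
    intro b c h
    have : Function.Injective (· + n) := add_left_injective n
    exact Finset.image_injective this h
  exact fun a b h => List.map_injective_iff.2 himg h

lemma mem_shiftC {n : ℕ} {Ψ : List (Finset ℕ)} {c : Finset ℕ} :
    c ∈ shiftC n Ψ ↔ ∃ e ∈ Ψ, c = e.image (· + n) := by
  simp [shiftC, eq_comm]

lemma shiftC_part_mem {n : ℕ} {Ψ : List (Finset ℕ)} {c : Finset ℕ} (hc : c ∈ shiftC n Ψ)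
    {x : ℕ} (hx : x ∈ c) : ∃ y ∈ U Ψ, x = y + n := by
  obtain ⟨e, he, rfl⟩ := mem_shiftC.1 hc
  obtain ⟨y, hy, rfl⟩ := Finset.mem_image.1 hx
  exact ⟨y, subset_U he hy, rfl⟩

lemma isSC_concat {n m : ℕ} {Φ Ψ : List (Finset ℕ)} (hΦ : IsSetComposition n Φ)
    (hΨ : IsSetComposition m Ψ) : IsSetComposition (n + m) (concatC n Φ Ψ) := by
  have hΦel : ∀ c ∈ Φ, ∀ x ∈ c, x ≤ n := fun c hc x hx =>
    (mem_ground.1 (sc_part_subset hΦ hc hx)).2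
  have hΨel : ∀ c ∈ shiftC n Ψ, ∀ x ∈ c, n + 1 ≤ x ∧ x ≤ n + m := by
    intro c hc x hx
    obtain ⟨y, hy, rfl⟩ := shiftC_part_mem hc hx
    rw [sc_U hΨ, mem_ground] at hy
    omega
  refine ⟨?_, ?_, ?_⟩
  · intro c hc
    rcases List.mem_append.1 hc with hc | hc
    · exact hΦ.1 c hc
    · obtain ⟨e, he, rfl⟩ := mem_shiftC.1 hc
      exact (hΨ.1 e he).image _
  · show List.Pairwise Disjoint (Φ ++ shiftC n Ψ)
    rw [List.pairwise_append]
    refine ⟨hΦ.2.1, ?_, ?_⟩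
    · unfold shiftC
      rw [List.pairwise_map]
      refine hΨ.2.1.imp_of_mem ?_
      intro a b ha hb hab
      rw [Finset.disjoint_left] at hab ⊢
      intro x hx hx'
      obtain ⟨y, hy, rfl⟩ := Finset.mem_image.1 hx
      obtain ⟨z, hz, hzy⟩ := Finset.mem_image.1 hx'
      have : z = y := by omega
      exact hab hy (this ▸ hz)
    · intro a ha b hb
      rw [Finset.disjoint_left]
      intro x hx hx'
      have h1 := hΦel a ha x hx
      have h2 := (hΨel b hb x hx').1
      omega
  · show U (Φ ++ shiftC n Ψ) = ground (n + m)
    rw [U_append, U_shiftC, sc_U hΦ, sc_U hΨ]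
    ext x
    simp only [Finset.mem_union, Finset.mem_image, mem_ground]
    constructor
    · rintro (h | ⟨y, hy, rfl⟩)
      · omega
      · omega
    · intro h
      by_cases hx : x ≤ n
      · left; omega
      · right
        refine ⟨x - n, ?_, by omega⟩
        omega

lemma concatC_length (n : ℕ) (Φ Ψ : List (Finset ℕ)) :
    (concatC n Φ Ψ).length = Φ.length + Ψ.length := by simp [concatC, shiftC]

end NCQ

namespace NCQ

/-! ### The inversion statistic -/

def cross (p q : Finset ℕ) : ℕ := ((p ×ˢ q).filter fun z => z.2 < z.1).card

def inv : List (Finset ℕ) → ℕ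
  | [] => 0
  | p :: L => (L.map (cross p)).sum + inv L

@[simp] lemma inv_nil : inv [] = 0 := rfl
lemma inv_cons (p L) : inv (p :: L) = (L.map (cross p)).sum + inv L := rfl

lemma cross_eq_zero {p q : Finset ℕ} (h : ∀ x ∈ p, ∀ y ∈ q, x < y) : cross p q = 0 := by
  unfold cross
  rw [Finset.card_eq_zero, Finset.filter_eq_empty_iff]
  rintro ⟨x, y⟩ hz
  rw [Finset.mem_product] at hz
  have := h x hz.1 y hz.2
  simp only [decide_eq_true_eq]
  omega

lemma cross_le (p q : Finset ℕ) : cross p q ≤ p.card * q.card := by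
  calc cross p q ≤ (p ×ˢ q).card := Finset.card_filter_le _ _
  _ = p.card * q.card := Finset.card_product p q

lemma cross_shift (n : ℕ) (p q : Finset ℕ) :
    cross (p.image (· + n)) (q.image (· + n)) = cross p q := by
  unfold cross
  have himg : ((p.image (· + n)) ×ˢ (q.image (· + n))).filter (fun z => z.2 < z.1)
      = ((p ×ˢ q).filter (fun z => z.2 < z.1)).image (fun z => (z.1 + n, z.2 + n)) := by
    ext ⟨a, b⟩
    simp only [Finset.mem_filter, Finset.mem_product, Finset.mem_image, Prod.mk.injEq,
      Prod.exists, decide_eq_true_eq]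
    constructor
    · rintro ⟨⟨⟨x, hx, rfl⟩, ⟨y, hy, rfl⟩⟩, hlt⟩
      exact ⟨x, y, ⟨⟨hx, hy⟩, by omega⟩, rfl, rfl⟩
    · rintro ⟨x, y, ⟨⟨hx, hy⟩, hlt⟩, rfl, rfl⟩
      exact ⟨⟨⟨x, hx, rfl⟩, ⟨y, hy, rfl⟩⟩, by omega⟩
  rw [himg, Finset.card_image_of_injective]
  rintro ⟨a, b⟩ ⟨c, d⟩ h
  simp only [Prod.mk.injEq] at h ⊢
  omega

lemma inv_append (l₁ l₂ : List (Finset ℕ)) :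
    inv (l₁ ++ l₂) = inv l₁ + inv l₂ + (l₁.map fun p => (l₂.map (cross p)).sum).sum := by
  induction l₁ with
  | nil => simp
  | cons p L ih =>
    simp only [List.cons_append, inv_cons, List.map_append, List.sum_append, List.map_cons,
      List.sum_cons, ih]
    ring

lemma inv_shiftC (n : ℕ) (Ψ : List (Finset ℕ)) : inv (shiftC n Ψ) = inv Ψ := by
  induction Ψ with
  | nil => simp [shiftC]
  | cons p L ih =>
    show inv (p.image (· + n) :: shiftC n L) = _
    rw [inv_cons, inv_cons, ih]
    congr 1
    show ((shiftC n L).map (cross (p.image (· + n)))).sum = _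
    unfold shiftC
    rw [List.map_map]
    congr 1
    apply List.map_congr_left
    intro a _
    exact cross_shift n p a

lemma inv_concatC {n : ℕ} {Φ Ψ : List (Finset ℕ)}
    (hΦ : ∀ c ∈ Φ, ∀ x ∈ c, x ≤ n) (hΨ : ∀ c ∈ Ψ, ∀ x ∈ c, 1 ≤ x) :
    inv (concatC n Φ Ψ) = inv Φ + inv Ψ := by
  unfold concatC
  rw [inv_append, inv_shiftC]
  have : ∀ p ∈ Φ, ((shiftC n Ψ).map (cross p)).sum = 0 := by
    intro p hp
    apply List.sum_eq_zero
    intro x hx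
    obtain ⟨q, hq, rfl⟩ := List.mem_map.1 hx
    obtain ⟨e, he, rfl⟩ := mem_shiftC.1 hq
    apply cross_eq_zero
    intro a ha b hb
    obtain ⟨y, hy, rfl⟩ := Finset.mem_image.1 hb
    have := hΦ p hp a ha
    have := hΨ e he y hy
    omega
  rw [List.sum_eq_zero fun x hx => by
    obtain ⟨p, hp, rfl⟩ := List.mem_map.1 hx; exact this p hp]
  omega

lemma sum_cross_le (p : Finset ℕ) (L : List (Finset ℕ)) :
    (L.map (cross p)).sum ≤ p.card * (L.map Finset.card).sum := by
  induction L with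
  | nil => simp
  | cons q L ih =>
    simp only [List.map_cons, List.sum_cons, Nat.mul_add]
    exact Nat.add_le_add (cross_le p q) ih

lemma inv_le_sq {Φ : List (Finset ℕ)} (h : Φ.Pairwise Disjoint) :
    inv Φ ≤ (U Φ).card ^ 2 := by
  induction Φ with
  | nil => simp
  | cons p L ih =>
    rw [List.pairwise_cons] at h
    have hdisj := disjoint_U h.1
    have hcard : (U (p :: L)).card = p.card + (U L).card := by
      rw [U_cons, Finset.card_union_of_disjoint hdisj]
    have h1 : (L.map (cross p)).sum ≤ p.card * (U L).card := by
      rw [card_U h.2]; exact sum_cross_le p L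
    have h2 := ih h.2
    rw [inv_cons, hcard]
    nlinarith

/-! ### Rank order -/

def ltR (Γ₀ Γ : List (Finset ℕ)) : Prop :=
  Γ.length < Γ₀.length ∨ (Γ.length = Γ₀.length ∧ inv Γ₀ < inv Γ)

lemma ltR_irrefl (Γ : List (Finset ℕ)) : ¬ ltR Γ Γ := by
  unfold ltR; omega

lemma ltR_length_le {Γ₀ Γ : List (Finset ℕ)} (h : ltR Γ₀ Γ) : Γ.length ≤ Γ₀.length := by
  rcases h with h | h <;> omega

/-! ### The meet lemmas -/

lemma meetC_eq_flatMap (Γ Δ : List (Finset ℕ)) :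
    meetC Γ Δ = Γ.flatMap fun c => (Δ.map fun d => c ∩ d).filter (·.Nonempty) := by
  unfold meetC
  rw [List.filter_flatMap]

lemma U_interParts (c : Finset ℕ) (Δ : List (Finset ℕ)) :
    U ((Δ.map fun d => c ∩ d).filter (·.Nonempty)) = c ∩ U Δ := by
  induction Δ with
  | nil => simp
  | cons d Δ ih =>
    simp only [List.map_cons, List.filter_cons]
    by_cases hd : (c ∩ d).Nonempty
    · rw [if_pos (by simpa using hd), U_cons, ih, U_cons, Finset.inter_union_distrib_left]
    · rw [if_neg (by simpa using hd), ih, U_cons, Finset.inter_union_distrib_left,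
        Finset.not_nonempty_iff_eq_empty.1 hd, Finset.empty_union]

lemma interParts_ne_nil {c : Finset ℕ} {Δ : List (Finset ℕ)} (hc : c.Nonempty)
    (hsub : c ⊆ U Δ) : ((Δ.map fun d => c ∩ d).filter (·.Nonempty)) ≠ [] := by
  obtain ⟨x, hx⟩ := hc
  obtain ⟨d, hd, hxd⟩ := mem_U.1 (hsub hx)
  apply List.ne_nil_of_mem (a := c ∩ d)
  rw [List.mem_filter]
  exact ⟨List.mem_map.2 ⟨d, hd, rfl⟩, by simp; exact ⟨x, Finset.mem_inter.2 ⟨hx, hxd⟩⟩⟩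

lemma interParts_no_split {c : Finset ℕ} {Δ : List (Finset ℕ)} (hΔ : Δ.Pairwise Disjoint)
    (hc : c.Nonempty) (hsub : c ⊆ U Δ) (hpure : ∀ d ∈ Δ, c ∩ d = c ∨ c ∩ d = ∅) :
    ((Δ.map fun d => c ∩ d).filter (·.Nonempty)) = [c] := by
  induction Δ with
  | nil =>
    exfalso; obtain ⟨x, hx⟩ := hc; simpa using hsub hx
  | cons d Δ ih =>
    rw [List.pairwise_cons] at hΔ
    simp only [List.map_cons, List.filter_cons]
    rcases hpure d (by simp) with hcd | hcd
    · have hcsub : c ⊆ d := by rw [← hcd]; exact Finset.inter_subset_right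
      have : ((Δ.map fun d' => c ∩ d').filter (·.Nonempty)) = [] := by
        rw [List.filter_eq_nil_iff]
        intro a ha
        obtain ⟨d', hd', rfl⟩ := List.mem_map.1 ha
        have hemp : c ∩ d' = ∅ := by
          apply Finset.eq_empty_of_forall_notMem
          intro x hx
          rw [Finset.mem_inter] at hx
          have := (hΔ.1 d' hd').le_bot (Finset.mem_inter.2 ⟨hcsub hx.1, hx.2⟩)
          simpa using this
        simp [hemp]
      rw [this, hcd, if_pos (by simpa using hc)]
    · rw [hcd, if_neg (by simp)]
      apply ih hΔ.2
      · intro x hx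
        have hxU := hsub hx
        rw [U_cons, Finset.mem_union] at hxU
        rcases hxU with h | h
        · exfalso
          have : x ∈ c ∩ d := Finset.mem_inter.2 ⟨hx, h⟩
          simp [hcd] at this
        · exact h
      · exact fun d' hd' => hpure d' (by simp [hd'])

end NCQ

namespace NCQ

lemma flatMap_id_of {Γ : List (Finset ℕ)} {g : Finset ℕ → List (Finset ℕ)}
    (h : ∀ c ∈ Γ, g c = [c]) : Γ.flatMap g = Γ := by
  induction Γ with
  | nil => simp
  | cons c Γ ih =>
    rw [List.flatMap_cons, h c (by simp), ih fun c hc => h c (by simp [hc])]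
    rfl

lemma sum_all_one {α : Type*} {f : α → ℕ} {l : List α} (h1 : ∀ x ∈ l, 1 ≤ f x)
    (h2 : (l.map f).sum = l.length) : ∀ x ∈ l, f x = 1 := by
  induction l with
  | nil => simp
  | cons a l ih =>
    simp only [List.map_cons, List.sum_cons, List.length_cons] at h2
    have ha := h1 a (by simp)
    have hsum := length_le_sum (l := l) fun x hx => h1 x (by simp [hx])
    have h2' : (l.map f).sum = l.length := by omega
    intro x hx
    rcases List.mem_cons.1 hx with rfl | hx
    · omega
    · exact ih (fun x hx => h1 x (by simp [hx])) h2' x hx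

lemma isSC_onePartC (n : ℕ) : IsSetComposition n (onePartC n) := by
  unfold onePartC
  by_cases hn : n = 0
  · subst hn; simp only [if_pos rfl]; exact isSC_nil
  · rw [if_neg hn]
    refine ⟨?_, ?_, ?_⟩
    · intro B hB
      rw [List.mem_singleton] at hB
      subst hB
      exact ⟨1, mem_ground.2 (by omega)⟩
    · simp
    · show ground n ∪ ∅ = ground n
      simp

/-- The two-block set composition appearing in `hmul`. -/
lemma D2_parts {n m d : ℕ → ℕ → Prop} : True := trivial

lemma mem_onePartC {n : ℕ} {d : Finset ℕ} (h : d ∈ onePartC n) : d = ground n := by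
  unfold onePartC at h
  split at h
  · simp at h
  · simpa using h

lemma meet_length_le {N : ℕ} {Γ Δ : List (Finset ℕ)} (hΓ : IsSetComposition N Γ)
    (hUΔ : U Δ = ground N) : Γ.length ≤ (meetC Γ Δ).length := by
  rw [meetC_eq_flatMap, List.length_flatMap]
  apply length_le_sum
  intro c hc
  have hne := interParts_ne_nil (hΓ.1 c hc) (by rw [hUΔ]; exact sc_part_subset hΓ hc)
  exact Nat.one_le_iff_ne_zero.2 fun h0 => hne (List.eq_nil_of_length_eq_zero h0)

lemma meet_length_eq {N : ℕ} {Γ Δ : List (Finset ℕ)} (hΓ : IsSetComposition N Γ)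
    (hUΔ : U Δ = ground N) (hlen : (meetC Γ Δ).length = Γ.length) : meetC Γ Δ = Γ := by
  rw [meetC_eq_flatMap]
  apply flatMap_id_of
  rw [meetC_eq_flatMap, List.length_flatMap] at hlen
  have h1 : ∀ c ∈ Γ, 1 ≤ ((Δ.map fun d => c ∩ d).filter (·.Nonempty)).length := by
    intro c hc
    have hne := interParts_ne_nil (hΓ.1 c hc) (by rw [hUΔ]; exact sc_part_subset hΓ hc)
    exact Nat.one_le_iff_ne_zero.2 fun h0 => hne (List.eq_nil_of_length_eq_zero h0)
  have hall : ∀ c ∈ Γ, ((Δ.map fun d => c ∩ d).filter (·.Nonempty)).length = 1 := by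
    have := sum_all_one (f := fun c => ((Δ.map fun d => c ∩ d).filter (·.Nonempty)).length)
      (l := Γ) h1 ?_
    · exact this
    · rw [← hlen]
  intro c hc
  obtain ⟨e, he⟩ := List.length_eq_one_iff.1 (hall c hc)
  have hU : U ((Δ.map fun d => c ∩ d).filter (·.Nonempty)) = c := by
    rw [U_interParts, hUΔ]
    exact Finset.inter_eq_left.2 (sc_part_subset hΓ hc)
  rw [he] at hU ⊢
  rw [show U [e] = e by simp] at hU
  rw [hU]

lemma meetC_concat_self {n m : ℕ} {Φ Ψ : List (Finset ℕ)} (hΦ : IsSetComposition n Φ)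
    (hΨ : IsSetComposition m Ψ) :
    meetC (concatC n Φ Ψ) (concatC n (onePartC n) (onePartC m)) = concatC n Φ Ψ := by
  set Δ := concatC n (onePartC n) (onePartC m) with hΔdef
  have hΔ : IsSetComposition (n + m) Δ := isSC_concat (isSC_onePartC n) (isSC_onePartC m)
  have hΓ : IsSetComposition (n + m) (concatC n Φ Ψ) := isSC_concat hΦ hΨ
  have hΔparts : ∀ d ∈ Δ, d = ground n ∨ d = (ground m).image (· + n) := by
    intro d hd
    rcases List.mem_append.1 hd with hd | hd
    · exact Or.inl (mem_onePartC hd)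
    · obtain ⟨e, he, rfl⟩ := mem_shiftC.1 hd
      exact Or.inr (by rw [mem_onePartC he])
  rw [meetC_eq_flatMap]
  apply flatMap_id_of
  intro c hc
  apply interParts_no_split hΔ.2.1 (hΓ.1 c hc)
  · rw [sc_U hΔ]; exact sc_part_subset hΓ hc
  · intro d hd
    rcases List.mem_append.1 hc with hcΦ | hcΨ
    · have hsub : c ⊆ ground n := sc_part_subset hΦ hcΦ
      rcases hΔparts d hd with rfl | rfl
      · exact Or.inl (Finset.inter_eq_left.2 hsub)
      · right
        apply Finset.eq_empty_of_forall_notMem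
        intro x hx
        rw [Finset.mem_inter] at hx
        obtain ⟨y, hy, rfl⟩ := Finset.mem_image.1 hx.2
        have h1 := (mem_ground.1 (hsub hx.1)).2
        have h2 := (mem_ground.1 hy).1
        omega
    · obtain ⟨e, he, rfl⟩ := mem_shiftC.1 hcΨ
      have hsub : e ⊆ ground m := sc_part_subset hΨ he
      rcases hΔparts d hd with rfl | rfl
      · right
        apply Finset.eq_empty_of_forall_notMem
        intro x hx
        rw [Finset.mem_inter] at hx
        obtain ⟨y, hy, rfl⟩ := Finset.mem_image.1 hx.1
        have h1 := (mem_ground.1 (hsub hy)).1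
        have h2 := (mem_ground.1 hx.2).2
        omega
      · exact Or.inl (Finset.inter_eq_left.2 (Finset.image_subset_image hsub))

lemma U_D2 (n m : ℕ) : U (concatC n (onePartC n) (onePartC m)) = ground (n + m) :=
  sc_U (isSC_concat (isSC_onePartC n) (isSC_onePartC m))

/-- The key consequence for terms in the `hmul` sum. -/
lemma meet_cond_cases {n m : ℕ} {Γ Φ Ψ : List (Finset ℕ)}
    (hΓ : IsSetComposition (n + m) Γ) (hΦ : IsSetComposition n Φ) (hΨ : IsSetComposition m Ψ)
    (hcond : meetC Γ (concatC n (onePartC n) (onePartC m)) = concatC n Φ Ψ) :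
    Γ = concatC n Φ Ψ ∨ Γ.length < Φ.length + Ψ.length := by
  have hU := U_D2 n m
  have hle := meet_length_le hΓ hU
  rw [hcond, concatC_length] at hle
  rcases Nat.lt_or_ge Γ.length (Φ.length + Ψ.length) with h | h
  · exact Or.inr h
  · left
    have hlen : (meetC Γ (concatC n (onePartC n) (onePartC m))).length = Γ.length := by
      rw [hcond, concatC_length]; omega
    rw [← meet_length_eq hΓ hU hlen, hcond]

end NCQ

namespace NCQ

lemma concatListC_cons (p : ℕ × List (Finset ℕ)) (L : List (ℕ × List (Finset ℕ))) :
    concatListC (p :: L) = ((concatListC L).1 + p.1, concatC p.1 p.2 (concatListC L).2) := rfl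

@[simp] lemma concatListC_nil : concatListC [] = (0, []) := rfl

lemma concatC_nil_right (n : ℕ) (Φ : List (Finset ℕ)) : concatC n Φ [] = Φ := by
  simp [concatC, shiftC]

lemma isSC_concatListC {L : List (ℕ × List (Finset ℕ))}
    (h : ∀ p ∈ L, IsSetComposition p.1 p.2) :
    IsSetComposition (concatListC L).1 (concatListC L).2 := by
  induction L with
  | nil => simpa using isSC_nil
  | cons p L ih =>
    rw [concatListC_cons]
    have h1 := h p (by simp)
    have h2 := ih fun q hq => h q (by simp [hq])
    have := isSC_concat h1 h2
    rwa [Nat.add_comm] at this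

lemma U_take_subset (k : ℕ) (L : List (Finset ℕ)) : U (L.take k) ⊆ U L := by
  intro x hx
  obtain ⟨p, hp, hxp⟩ := mem_U.1 hx
  exact mem_U.2 ⟨p, List.take_subset k L hp, hxp⟩

lemma exists_factorization (n : ℕ) : ∀ Φ, IsSetComposition n Φ →
    ∃ L : List (ℕ × List (Finset ℕ)), (∀ p ∈ L, AtomicC p.1 p.2) ∧ concatListC L = (n, Φ) := by
  induction n using Nat.strong_induction_on with
  | _ n ih =>
    intro Φ hΦ
    rcases Nat.eq_zero_or_pos n with rfl | hn
    · exact ⟨[], by simp, by simp [isSC_zero hΦ]⟩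
    · have hS : ∃ k, 0 < k ∧ k ≤ n ∧ ∃ Ψ Γ, IsSetComposition k Ψ ∧
          IsSetComposition (n - k) Γ ∧ Φ = concatC k Ψ Γ := by
        refine ⟨n, hn, le_refl n, Φ, [], hΦ, ?_, by rw [concatC_nil_right]⟩
        rw [Nat.sub_self]; exact isSC_nil
      obtain ⟨hk0pos, hk0le, Ψ, Γ, hΨ, hΓ, hsplit⟩ := Nat.find_spec hS
      set k0 := Nat.find hS with hk0def
      have hΨatomic : AtomicC k0 Ψ := by
        refine ⟨hΨ, hk0pos, ?_⟩
        rintro ⟨j, Ψ1, Ψ2, hj, hjlt, h1, h2, rfl⟩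
        have hconcat : Φ = concatC j Ψ1 (concatC (k0 - j) Ψ2 Γ) := by
          rw [hsplit, ← concatC_assoc]
          congr 1
          omega
        have hsc : IsSetComposition (n - j) (concatC (k0 - j) Ψ2 Γ) := by
          have := isSC_concat h2 hΓ
          have harith : k0 - j + (n - k0) = n - j := by omega
          rwa [harith] at this
        exact Nat.find_min hS (show j < k0 from hjlt)
          ⟨hj, by omega, Ψ1, concatC (k0 - j) Ψ2 Γ, h1, hsc, hconcat⟩
      obtain ⟨L', hL'atom, hL'eq⟩ := ih (n - k0) (by omega) Γ hΓ
      refine ⟨(k0, Ψ) :: L', ?_, ?_⟩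
      · intro p hp
        rcases List.mem_cons.1 hp with rfl | hp
        · exact hΨatomic
        · exact hL'atom p hp
      · rw [concatListC_cons, hL'eq]
        have : n - k0 + k0 = n := by omega
        rw [this, ← hsplit]

lemma prefix_of_append_eq {α : Type*} {l1 r1 l2 r2 : List α} {P : α → Prop}
    (h : l1 ++ r1 = l2 ++ r2) (h1 : ∀ x ∈ l1, P x) (h2' : ∀ x ∈ r2, ¬ P x) :
    ∃ t, l2 = l1 ++ t ∧ r1 = t ++ r2 := by
  rcases List.append_eq_append_iff.1 h with ⟨a, ha1, ha2⟩ | ⟨c, hc1, hc2⟩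
  · exact ⟨a, ha1, ha2⟩
  · have hc : c = [] := by
      cases c with
      | nil => rfl
      | cons x t =>
        exfalso
        have hx1 : x ∈ l1 := by rw [hc1]; simp
        have hx2 : x ∈ r2 := by rw [hc2]; simp
        exact h2' x hx2 (h1 x hx1)
    subst hc
    simp at hc1 hc2
    exact ⟨[], by simp [hc1], by simp [hc2]⟩

lemma shiftC_part_not_subset {k m : ℕ} {X : List (Finset ℕ)} (hX : IsSetComposition m X)
    {q : ℕ} (hq : k ≤ q) {c : Finset ℕ} (hc : c ∈ shiftC q X) : ¬ c ⊆ ground k := by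
  obtain ⟨e, he, rfl⟩ := mem_shiftC.1 hc
  obtain ⟨y, hy⟩ := hX.1 e he
  intro hsub
  have hy1 := (mem_ground.1 (sc_part_subset hX he hy)).1
  have : y + q ∈ ground k := hsub (Finset.mem_image.2 ⟨y, hy, rfl⟩)
  rw [mem_ground] at this
  omega

lemma not_head_lt {p1 q1 s1 s2 : ℕ} {Φ1 W X1 X2 : List (Finset ℕ)}
    (ha : AtomicC p1 Φ1) (hb : AtomicC q1 W)
    (hX1 : IsSetComposition s1 X1) (hX2 : IsSetComposition s2 X2)
    (heq : concatC p1 Φ1 X1 = concatC q1 W X2) : ¬ p1 < q1 := by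
  intro hlt
  obtain ⟨t, ht1, ht2⟩ := prefix_of_append_eq (P := fun c => c ⊆ ground p1) heq
    (fun c hc => sc_part_subset ha.1 hc)
    (fun c hc => shiftC_part_not_subset hX2 (le_of_lt hlt) hc)
  -- t is a prefix of `shiftC p1 X1`
  have htt : t = shiftC p1 (X1.take t.length) := by
    conv_lhs => rw [show t = (shiftC p1 X1).take t.length from by rw [ht2, List.take_left]]
    exact (List.map_take).symm
  set Y := X1.take t.length with hY
  have hWconcat : W = concatC p1 Φ1 Y := by
    rw [ht1, htt, hY]; rfl
  -- Y is a set composition of q1 - p1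
  have hYsub : ∀ c ∈ Y, c ∈ X1 := fun c hc => List.take_subset _ _ hc
  have hUY : U Y = ground (q1 - p1) := by
    have hUW : U W = ground q1 := sc_U hb.1
    rw [hWconcat] at hUW
    unfold concatC at hUW
    rw [U_append, ← htt] at hUW
    rw [htt] at hUW
    rw [U_shiftC, sc_U ha.1] at hUW
    -- hUW : ground p1 ∪ (U Y).image (· + p1) = ground q1
    have hel : ∀ y ∈ U Y, 1 ≤ y := by
      intro y hy
      have : y ∈ U X1 := U_take_subset _ _ hy
      rw [sc_U hX1, mem_ground] at this
      omega
    ext x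
    rw [mem_ground]
    constructor
    · intro hx
      have h1 := hel x hx
      have : x + p1 ∈ ground p1 ∪ (U Y).image (· + p1) :=
        Finset.mem_union_right _ (Finset.mem_image.2 ⟨x, hx, rfl⟩)
      rw [hUW, mem_ground] at this
      omega
    · intro hx
      have : x + p1 ∈ ground q1 := mem_ground.2 (by omega)
      rw [← hUW, Finset.mem_union] at this
      rcases this with h | h
      · rw [mem_ground] at h; omega
      · obtain ⟨y, hy, hyx⟩ := Finset.mem_image.1 h
        have : y = x := by omega
        rwa [← this]
  have hYsc : IsSetComposition (q1 - p1) Y := by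
    refine ⟨fun c hc => hX1.1 c (hYsub c hc), ?_, hUY⟩
    exact List.Pairwise.sublist (List.take_sublist _ _) hX1.2.1
  exact hb.2.2 ⟨p1, Φ1, Y, ha.2.1, hlt, ha.1, hYsc, hWconcat⟩

lemma factor_head_eq {p1 q1 s1 s2 : ℕ} {Φ1 W X1 X2 : List (Finset ℕ)}
    (ha : AtomicC p1 Φ1) (hb : AtomicC q1 W)
    (hX1 : IsSetComposition s1 X1) (hX2 : IsSetComposition s2 X2)
    (heq : concatC p1 Φ1 X1 = concatC q1 W X2) : p1 = q1 ∧ Φ1 = W ∧ X1 = X2 := by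
  have h1 := not_head_lt ha hb hX1 hX2 heq
  have h2 := not_head_lt hb ha hX2 hX1 heq.symm
  have hpq : p1 = q1 := by omega
  subst hpq
  obtain ⟨t, ht1, ht2⟩ := prefix_of_append_eq (P := fun c => c ⊆ ground p1) heq
    (fun c hc => sc_part_subset ha.1 hc)
    (fun c hc => shiftC_part_not_subset hX2 (le_refl p1) hc)
  obtain ⟨t', ht1', ht2'⟩ := prefix_of_append_eq (P := fun c => c ⊆ ground p1) heq.symm
    (fun c hc => sc_part_subset hb.1 hc)
    (fun c hc => shiftC_part_not_subset hX1 (le_refl p1) hc)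
  have htnil : t = [] := by
    rw [ht1] at ht1'
    have hlen := congrArg List.length ht1'
    rw [List.append_assoc, List.length_append, List.length_append] at hlen
    have : t.length = 0 := by omega
    exact List.eq_nil_of_length_eq_zero this
  subst htnil
  rw [List.append_nil] at ht1
  rw [List.nil_append] at ht2
  exact ⟨rfl, ht1.symm, shiftC_injective p1 ht2⟩

lemma factorization_unique : ∀ L1 L2 : List (ℕ × List (Finset ℕ)),
    (∀ p ∈ L1, AtomicC p.1 p.2) → (∀ p ∈ L2, AtomicC p.1 p.2) →
    concatListC L1 = concatListC L2 → L1 = L2 := by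
  intro L1
  induction L1 with
  | nil =>
    intro L2 _ h2 heq
    cases L2 with
    | nil => rfl
    | cons q L2 =>
      exfalso
      rw [concatListC_nil, concatListC_cons] at heq
      have h0 : (0 : ℕ) = (concatListC L2).1 + q.1 := congrArg Prod.fst heq
      have := (h2 q (by simp)).2.1
      omega
  | cons p L1 ih =>
    intro L2 h1 h2 heq
    cases L2 with
    | nil =>
      exfalso
      rw [concatListC_nil, concatListC_cons] at heq
      have h0 : (concatListC L1).1 + p.1 = (0 : ℕ) := congrArg Prod.fst heq
      have := (h1 p (by simp)).2.1
      omega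
    | cons q L2 =>
      rw [concatListC_cons, concatListC_cons] at heq
      have hsz : (concatListC L1).1 + p.1 = (concatListC L2).1 + q.1 := congrArg Prod.fst heq
      have heq2 : concatC p.1 p.2 (concatListC L1).2 = concatC q.1 q.2 (concatListC L2).2 :=
        congrArg Prod.snd heq
      have hX1 := isSC_concatListC (L := L1) fun r hr => (h1 r (List.mem_cons_of_mem p hr)).1
      have hX2 := isSC_concatListC (L := L2) fun r hr => (h2 r (List.mem_cons_of_mem q hr)).1
      obtain ⟨hp1, hΦ, hX⟩ := factor_head_eq (h1 p (by simp)) (h2 q (by simp)) hX1 hX2 heq2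
      have htail : L1 = L2 := by
        apply ih L2 (fun r hr => h1 r (List.mem_cons_of_mem p hr))
          (fun r hr => h2 r (List.mem_cons_of_mem q hr))
        have : (concatListC L1).1 = (concatListC L2).1 := by omega
        exact Prod.ext this hX
      rw [htail]
      congr 1
      exact Prod.ext hp1 hΦ

end NCQ

namespace NCQ

/-! ### leStarC length facts -/

lemma coverStarC_length {Φ Ψ : List (Finset ℕ)} (h : coverStarC Φ Ψ) :
    Ψ.length + 1 = Φ.length := by
  obtain ⟨L₁, a, b, L₂, rfl, -, rfl⟩ := h
  simp
  omega

lemma leStarC_length {Φ Ψ : List (Finset ℕ)} (h : leStarC Φ Ψ) :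
    Ψ.length ≤ Φ.length ∧ (Ψ.length = Φ.length → Ψ = Φ) := by
  induction h with
  | refl => exact ⟨le_refl _, fun _ => rfl⟩
  | tail hab hbc ih =>
    have h1 := coverStarC_length hbc
    rename_i b c
    refine ⟨by omega, fun hc => ?_⟩
    omega

section Alg

variable {R : Type*} [Ring R] [Algebra ℚ R] (M : ℕ → List (Finset ℕ) → R)

/-- The `Q`-generators. -/
def Qel (a : AtomCIdx) : R := ∑ Φ' ∈ SCs a.1.1 (fun Φ' => leStarC a.1.2 Φ'), M a.1.1 Φ'

/-- The product of `Q`-generators along a word. -/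
def Pw (w : List AtomCIdx) : R := (w.map (Qel M)).prod

@[simp] lemma Pw_nil : Pw M [] = 1 := rfl

lemma Pw_cons (a : AtomCIdx) (w : List AtomCIdx) : Pw M (a :: w) = Qel M a * Pw M w := by
  simp [Pw]

def NW (w : List AtomCIdx) : ℕ := (concatListC (w.map Subtype.val)).1

def CW (w : List AtomCIdx) : List (Finset ℕ) := (concatListC (w.map Subtype.val)).2

@[simp] lemma NW_nil : NW [] = 0 := rfl
@[simp] lemma CW_nil : CW [] = [] := rfl

lemma NW_cons (a : AtomCIdx) (w : List AtomCIdx) : NW (a :: w) = NW w + a.1.1 := rfl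

lemma CW_cons (a : AtomCIdx) (w : List AtomCIdx) :
    CW (a :: w) = concatC a.1.1 a.1.2 (CW w) := rfl

lemma isSC_CW (w : List AtomCIdx) : IsSetComposition (NW w) (CW w) := by
  apply isSC_concatListC
  intro p hp
  obtain ⟨a, _, rfl⟩ := List.mem_map.1 hp
  exact a.2.1

lemma NWCW_inj {w1 w2 : List AtomCIdx} (h1 : NW w1 = NW w2) (h2 : CW w1 = CW w2) :
    w1 = w2 := by
  have hmap : w1.map Subtype.val = w2.map Subtype.val := by
    apply factorization_unique
    · intro p hp; obtain ⟨a, _, rfl⟩ := List.mem_map.1 hp; exact a.2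
    · intro p hp; obtain ⟨a, _, rfl⟩ := List.mem_map.1 hp; exact a.2
    · exact Prod.ext h1 h2
  exact List.map_injective_iff.2 Subtype.val_injective hmap

/-- The span of strictly larger basis elements. -/
def Tail (N : ℕ) (Γ₀ : List (Finset ℕ)) : Submodule ℚ R :=
  Submodule.span ℚ {x | ∃ Γ, IsSetComposition N Γ ∧ ltR Γ₀ Γ ∧ x = M N Γ}

/-- Span of elements with length bounded above. -/
def TailLe (N : ℕ) (Γ₀ : List (Finset ℕ)) : Submodule ℚ R :=
  Submodule.span ℚ {x | ∃ Γ, IsSetComposition N Γ ∧ Γ.length ≤ Γ₀.length ∧ x = M N Γ}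

variable (hmul : ∀ n m Φ Ψ, IsSetComposition n Φ → IsSetComposition m Ψ →
      M n Φ * M m Ψ =
        ∑ Γ ∈ SCs (n + m)
            (fun Γ => meetC Γ (concatC n (onePartC n) (onePartC m)) = concatC n Φ Ψ),
          M (n + m) Γ)

include hmul

lemma small_mul_mem {p q : ℕ} {Φ' Γ' Γf : List (Finset ℕ)}
    (hΦ' : IsSetComposition p Φ') (hΓ' : IsSetComposition q Γ')
    (hlen : Φ'.length + Γ'.length < Γf.length) :
    M p Φ' * M q Γ' ∈ Tail M (p + q) Γf := by
  rw [hmul p q Φ' Γ' hΦ' hΓ']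
  apply Submodule.sum_mem
  intro Γ hΓ
  obtain ⟨hΓsc, hcond⟩ := mem_SCs.1 hΓ
  have hcase := meet_cond_cases hΓsc hΦ' hΓ' hcond
  apply Submodule.subset_span
  refine ⟨Γ, hΓsc, Or.inl ?_, rfl⟩
  rcases hcase with rfl | h
  · rw [concatC_length]; omega
  · omega

lemma lead_mul_mem {p q : ℕ} {A Γ₀ Γ' : List (Finset ℕ)}
    (hA : IsSetComposition p A) (hΓ₀ : IsSetComposition q Γ₀)
    (hΓ' : IsSetComposition q Γ') (hlt : ltR Γ₀ Γ') :
    M p A * M q Γ' ∈ Tail M (p + q) (concatC p A Γ₀) := by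
  rw [hmul p q A Γ' hA hΓ']
  apply Submodule.sum_mem
  intro Γ hΓ
  obtain ⟨hΓsc, hcond⟩ := mem_SCs.1 hΓ
  have hcase := meet_cond_cases hΓsc hA hΓ' hcond
  apply Submodule.subset_span
  refine ⟨Γ, hΓsc, ?_, rfl⟩
  have hlen' := ltR_length_le hlt
  rcases hcase with rfl | h
  · rcases hlt with h | ⟨hl, hi⟩
    · left; rw [concatC_length, concatC_length]; omega
    · right
      constructor
      · rw [concatC_length, concatC_length]; omega
      · have e1 : inv (concatC p A Γ₀) = inv A + inv Γ₀ :=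
          inv_concatC (fun c hc x hx => (mem_ground.1 (sc_part_subset hA hc hx)).2)
            (fun c hc x hx => (mem_ground.1 (sc_part_subset hΓ₀ hc hx)).1)
        have e2 : inv (concatC p A Γ') = inv A + inv Γ' :=
          inv_concatC (fun c hc x hx => (mem_ground.1 (sc_part_subset hA hc hx)).2)
            (fun c hc x hx => (mem_ground.1 (sc_part_subset hΓ' hc hx)).1)
        rw [e1, e2]; omega
  · left; rw [concatC_length]; omega

lemma mul_tail_mem {p q : ℕ} {A Γ₀ : List (Finset ℕ)}
    (hA : IsSetComposition p A) (hΓ₀ : IsSetComposition q Γ₀)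
    {x : R} (hx : x ∈ Tail M q Γ₀) :
    M p A * x ∈ Tail M (p + q) (concatC p A Γ₀) := by
  refine Submodule.span_induction
    (p := fun x _ => M p A * x ∈ Tail M (p + q) (concatC p A Γ₀)) ?_ ?_ ?_ ?_ hx
  · rintro x ⟨Γ', hΓ', hlt, rfl⟩
    exact lead_mul_mem M hmul hA hΓ₀ hΓ' hlt
  · show M p A * (0:R) ∈ _
    rw [mul_zero]; exact Submodule.zero_mem _
  · intro x y _ _ hx hy
    show M p A * (x + y) ∈ _
    rw [mul_add]; exact Submodule.add_mem _ hx hy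
  · intro c x _ hx
    show M p A * (c • x) ∈ _
    rw [Algebra.mul_smul_comm]; exact Submodule.smul_mem _ c hx

lemma small_mul_tailLe_mem {p q : ℕ} {Φ' Γ₀ Γf : List (Finset ℕ)}
    (hΦ' : IsSetComposition p Φ')
    (hlen : Φ'.length + Γ₀.length < Γf.length)
    {x : R} (hx : x ∈ TailLe M q Γ₀) :
    M p Φ' * x ∈ Tail M (p + q) Γf := by
  refine Submodule.span_induction
    (p := fun x _ => M p Φ' * x ∈ Tail M (p + q) Γf) ?_ ?_ ?_ ?_ hx
  · rintro x ⟨Γ', hΓ', hle, rfl⟩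
    exact small_mul_mem M hmul hΦ' hΓ' (by omega)
  · show M p Φ' * (0:R) ∈ _
    rw [mul_zero]; exact Submodule.zero_mem _
  · intro x y _ _ hx hy
    show M p Φ' * (x + y) ∈ _
    rw [mul_add]; exact Submodule.add_mem _ hx hy
  · intro c x _ hx
    show M p Φ' * (c • x) ∈ _
    rw [Algebra.mul_smul_comm]; exact Submodule.smul_mem _ c hx

omit hmul

lemma tail_le_tailLe {N : ℕ} {Γ₀ : List (Finset ℕ)} : Tail M N Γ₀ ≤ TailLe M N Γ₀ := by
  apply Submodule.span_le.2
  rintro x ⟨Γ, hΓ, hlt, rfl⟩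
  exact Submodule.subset_span ⟨Γ, hΓ, ltR_length_le hlt, rfl⟩

include hmul

/-- The main triangular expansion. -/
lemma main_expansion (hone : M 0 [] = 1) :
    ∀ w : List AtomCIdx, Pw M w - M (NW w) (CW w) ∈ Tail M (NW w) (CW w) := by
  intro w
  induction w with
  | nil => simp [hone]
  | cons a w IH =>
    set p := a.1.1 with hp
    set A := a.1.2 with hA
    set q := NW w with hq
    set Γ₀ := CW w with hΓ₀def
    have hAat : AtomicC p A := a.2
    have hAsc : IsSetComposition p A := hAat.1
    have hΓ₀ : IsSetComposition q Γ₀ := isSC_CW w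
    have hNW : NW (a :: w) = q + p := rfl
    have hCW : CW (a :: w) = concatC p A Γ₀ := rfl
    rw [hNW, hCW, Nat.add_comm q p]
    set Γf := concatC p A Γ₀ with hΓf
    have hΓflen : Γf.length = A.length + Γ₀.length := concatC_length p A Γ₀
    -- the set S of Φ' appearing in Qel a
    set S := SCs p (fun Φ' => leStarC A Φ') with hS
    have hAmem : A ∈ S := mem_SCs.2 ⟨hAsc, Relation.ReflTransGen.refl⟩
    have hQel : Qel M a = (∑ Φ' ∈ S.erase A, M p Φ') + M p A :=
      (Finset.sum_erase_add S _ hAmem).symm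
    set E := Pw M w - M q Γ₀ with hE
    have hPww : Pw M w = M q Γ₀ + E := by rw [hE]; abel
    have hPwwLe : Pw M w ∈ TailLe M q Γ₀ := by
      rw [hPww]
      refine Submodule.add_mem _ (Submodule.subset_span ⟨Γ₀, hΓ₀, le_refl _, rfl⟩) ?_
      exact tail_le_tailLe M IH
    -- Claim 1
    have hC1 : M p A * M q Γ₀ - M (p + q) Γf ∈ Tail M (p + q) Γf := by
      rw [hmul p q A Γ₀ hAsc hΓ₀]
      have hΓfmem : Γf ∈ SCs (p + q)
          (fun Γ => meetC Γ (concatC p (onePartC p) (onePartC q)) = concatC p A Γ₀) :=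
        mem_SCs.2 ⟨isSC_concat hAsc hΓ₀, meetC_concat_self hAsc hΓ₀⟩
      rw [← Finset.sum_erase_add _ _ hΓfmem, add_sub_cancel_right]
      apply Submodule.sum_mem
      intro Γ hΓ
      rw [Finset.mem_erase] at hΓ
      obtain ⟨hne, hΓmem⟩ := hΓ
      obtain ⟨hΓsc, hcond⟩ := mem_SCs.1 hΓmem
      have hcase := meet_cond_cases hΓsc hAsc hΓ₀ hcond
      apply Submodule.subset_span
      refine ⟨Γ, hΓsc, Or.inl ?_, rfl⟩
      rcases hcase with h | h
      · exact absurd h hne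
      · omega
    -- Claim 2
    have hC2 : M p A * E ∈ Tail M (p + q) Γf := mul_tail_mem M hmul hAsc hΓ₀ IH
    -- Claim 3+4
    have hC34 : (∑ Φ' ∈ S.erase A, M p Φ') * Pw M w ∈ Tail M (p + q) Γf := by
      rw [Finset.sum_mul]
      apply Submodule.sum_mem
      intro Φ' hΦ'
      rw [Finset.mem_erase] at hΦ'
      obtain ⟨hne, hΦ'mem⟩ := hΦ'
      obtain ⟨hΦ'sc, hΦ'le⟩ := mem_SCs.1 hΦ'mem
      have hlen := leStarC_length hΦ'le
      have hstrict : Φ'.length < A.length := by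
        rcases Nat.lt_or_ge Φ'.length A.length with h | h
        · exact h
        · exact absurd (hlen.2 (by omega)) hne
      exact small_mul_tailLe_mem M hmul hΦ'sc (by omega) hPwwLe
    -- assemble
    have hC12 : M p A * Pw M w - M (p + q) Γf ∈ Tail M (p + q) Γf := by
      have hsplit : M p A * Pw M w - M (p + q) Γf =
          (M p A * M q Γ₀ - M (p + q) Γf) + M p A * E := by
        rw [hPww, mul_add]; abel
      rw [hsplit]
      exact Submodule.add_mem _ hC1 hC2
    have hdecomp : Pw M (a :: w) - M (p + q) Γf =
        (M p A * Pw M w - M (p + q) Γf) + (∑ Φ' ∈ S.erase A, M p Φ') * Pw M w := by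
      rw [Pw_cons, hQel, add_mul]
      abel
    rw [hdecomp]
    exact Submodule.add_mem _ hC12 hC34

end Alg

end NCQ

namespace NCQ

def rk (N : ℕ) (Γ : List (Finset ℕ)) : ℕ := (N - Γ.length) * (N ^ 2 + 1) + inv Γ

lemma inv_le_of_sc {N : ℕ} {Γ : List (Finset ℕ)} (h : IsSetComposition N Γ) :
    inv Γ ≤ N ^ 2 := by
  have h1 := inv_le_sq h.2.1
  rw [sc_U h] at h1
  simpa using h1

lemma rk_le {N : ℕ} {Γ : List (Finset ℕ)} (h : IsSetComposition N Γ) :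
    rk N Γ ≤ N * (N ^ 2 + 1) + N ^ 2 := by
  unfold rk
  have h1 := inv_le_of_sc h
  have h2 : N - Γ.length ≤ N := Nat.sub_le _ _
  have h3 := Nat.mul_le_mul_right (N ^ 2 + 1) h2
  omega

lemma ltR_rk {N : ℕ} {Γ Γ' : List (Finset ℕ)} (hΓ : IsSetComposition N Γ)
    (hΓ' : IsSetComposition N Γ') (h : ltR Γ Γ') : rk N Γ < rk N Γ' := by
  have hlen := sc_length_le hΓ
  have hlen' := sc_length_le hΓ'
  have hinv := inv_le_of_sc hΓ
  rcases h with h | ⟨h1, h2⟩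
  · unfold rk
    have hx : (N - Γ.length) + 1 ≤ N - Γ'.length := by omega
    have h4 := Nat.mul_le_mul_right (N ^ 2 + 1) hx
    rw [Nat.succ_mul] at h4
    omega
  · unfold rk
    rw [h1]
    omega

section Alg2

variable {R : Type*} [Ring R] [Algebra ℚ R] (M : ℕ → List (Finset ℕ) → R)
variable (hli : LinearIndependent ℚ (fun i : SCIdx => M i.1.1 i.1.2))
variable (hspan : Submodule.span ℚ (Set.range fun i : SCIdx => M i.1.1 i.1.2) = ⊤)

/-- The basis given by the `M`'s. -/
def bM : Module.Basis SCIdx ℚ R := Module.Basis.mk hli (by rw [hspan])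

lemma bM_apply (i : SCIdx) : bM M hli hspan i = M i.1.1 i.1.2 := Module.Basis.mk_apply _ _ _

lemma repr_tail {N : ℕ} {Γ₀ : List (Finset ℕ)} {x : R} (hx : x ∈ Tail M N Γ₀) (j : SCIdx)
    (hj : (bM M hli hspan).repr x j ≠ 0) : j.1.1 = N ∧ ltR Γ₀ j.1.2 := by
  refine Submodule.span_induction
    (p := fun x _ => (bM M hli hspan).repr x j ≠ 0 → j.1.1 = N ∧ ltR Γ₀ j.1.2)
    ?_ ?_ ?_ ?_ hx hj
  · rintro x ⟨Γ, hΓ, hlt, rfl⟩ hj'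
    have hMb : M N Γ = bM M hli hspan ⟨(N, Γ), hΓ⟩ := (bM_apply M hli hspan ⟨(N, Γ), hΓ⟩).symm
    rw [hMb, Module.Basis.repr_self, Finsupp.single_apply] at hj'
    split at hj'
    · rename_i hji
      rw [← hji]
      exact ⟨rfl, hlt⟩
    · exact absurd rfl hj'
  · intro h; rw [map_zero] at h; simp at h
  · intro x y _ _ hx' hy' hxy
    rw [map_add, Finsupp.add_apply] at hxy
    by_cases h1 : (bM M hli hspan).repr x j = 0
    · exact hy' (by intro h2; rw [h1, h2] at hxy; simp at hxy)
    · exact hx' h1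
  · intro c x _ hx' hcx
    apply hx'
    intro h0
    rw [map_smul, Finsupp.smul_apply, h0] at hcx
    simp at hcx

variable (hone : M 0 [] = 1)
variable (hmul : ∀ n m Φ Ψ, IsSetComposition n Φ → IsSetComposition m Ψ →
      M n Φ * M m Ψ =
        ∑ Γ ∈ SCs (n + m)
            (fun Γ => meetC Γ (concatC n (onePartC n) (onePartC m)) = concatC n Φ Ψ),
          M (n + m) Γ)

include hli hspan hmul hone

/-- Linear independence of the products of `Q`-generators. -/
lemma pw_indep (s : Finset (List AtomCIdx)) (g : List AtomCIdx → ℚ)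
    (hsum : ∑ w ∈ s, g w • Pw M w = 0) : ∀ w ∈ s, g w = 0 := by
  classical
  by_contra hcon
  push_neg at hcon
  obtain ⟨w', hw's, hgw'⟩ := hcon
  set b := bM M hli hspan with hb
  set s' := s.filter (fun w => g w ≠ 0) with hs'
  have hs'ne : s'.Nonempty := ⟨w', Finset.mem_filter.2 ⟨hw's, hgw'⟩⟩
  obtain ⟨w0, hw0, hmin⟩ := Finset.exists_min_image s'
    (fun w => toLex (NW w, rk (NW w) (CW w))) hs'ne
  have hw0s : w0 ∈ s := (Finset.mem_filter.1 hw0).1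
  have hgw0 : g w0 ≠ 0 := (Finset.mem_filter.1 hw0).2
  set j0 : SCIdx := ⟨(NW w0, CW w0), isSC_CW w0⟩ with hj0
  -- evaluate the coordinate at j0
  have hcoord : ∑ w ∈ s, g w * (b.repr (Pw M w)) j0 = 0 := by
    have h1 : b.repr (∑ w ∈ s, g w • Pw M w) = 0 := by rw [hsum, map_zero]
    rw [map_sum] at h1
    have h2 := congrArg (fun f => f j0) h1
    simpa [Finsupp.finset_sum_apply, map_smul, Finsupp.smul_apply] using h2
  -- each term
  have hterm : ∀ w ∈ s, w ≠ w0 → g w * (b.repr (Pw M w)) j0 = 0 := by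
    intro w hws hwne
    rcases eq_or_ne (g w) 0 with h | hgw
    · rw [h, zero_mul]
    have hEw := main_expansion M hmul hone w
    have hPdecomp : Pw M w = M (NW w) (CW w) + (Pw M w - M (NW w) (CW w)) := by abel
    have hMb : M (NW w) (CW w) = b ⟨(NW w, CW w), isSC_CW w⟩ :=
      (bM_apply M hli hspan ⟨(NW w, CW w), isSC_CW w⟩).symm
    have hval : (b.repr (Pw M w)) j0 = 0 := by
      rw [hPdecomp, map_add, Finsupp.add_apply, hMb, Module.Basis.repr_self, Finsupp.single_apply]
      have hne : (⟨(NW w, CW w), isSC_CW w⟩ : SCIdx) ≠ j0 := by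
        intro hcontra
        apply hwne
        have := congrArg (fun i : SCIdx => i.1) hcontra
        simp only [hj0] at this
        exact NWCW_inj (congrArg Prod.fst this) (congrArg Prod.snd this)
      rw [if_neg hne]
      have hEzero : (b.repr (Pw M w - M (NW w) (CW w))) j0 = 0 := by
        by_contra h0
        obtain ⟨hN, hlt⟩ := repr_tail M hli hspan hEw j0 h0
        -- contradiction with minimality
        have hNeq : NW w = NW w0 := by
          have : j0.1.1 = NW w0 := rfl
          omega
        have hj02 : j0.1.2 = CW w0 := rfl
        rw [hj02] at hlt
        have hrk : rk (NW w0) (CW w) < rk (NW w0) (CW w0) := by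
          apply ltR_rk _ (isSC_CW w0) hlt
          rw [← hNeq]; exact isSC_CW w
        have hmin' := hmin w (Finset.mem_filter.2 ⟨hws, hgw⟩)
        rw [Prod.Lex.le_iff] at hmin'
        rcases hmin' with h | ⟨h1, h2⟩
        · simp only [ofLex_toLex] at h; omega
        · simp only [ofLex_toLex] at h1 h2
          rw [hNeq] at h2
          omega
      rw [← hMb, hEzero]
      simp
    rw [hval, mul_zero]
  have hsum0 : ∑ w ∈ s, g w * (b.repr (Pw M w)) j0 = g w0 * (b.repr (Pw M w0)) j0 :=
    Finset.sum_eq_single w0 (fun w hws hne => hterm w hws hne) (fun h => absurd hw0s h)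
  have hlead : (b.repr (Pw M w0)) j0 = 1 := by
    have hEw := main_expansion M hmul hone w0
    have hPdecomp : Pw M w0 = M (NW w0) (CW w0) + (Pw M w0 - M (NW w0) (CW w0)) := by abel
    have hMb : M (NW w0) (CW w0) = b j0 := (bM_apply M hli hspan j0).symm
    rw [hPdecomp, map_add, Finsupp.add_apply, hMb, Module.Basis.repr_self, Finsupp.single_apply,
      if_pos rfl]
    have hEzero : (b.repr (Pw M w0 - M (NW w0) (CW w0))) j0 = 0 := by
      by_contra h0
      obtain ⟨hN, hlt⟩ := repr_tail M hli hspan hEw j0 h0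
      exact ltR_irrefl (CW w0) hlt
    rw [← hMb, hEzero]
    norm_num
  rw [hsum0, hlead, mul_one] at hcoord
  exact hgw0 hcoord

omit hli hspan

/-- All `M`'s lie in any subalgebra containing the `Q`-generators. -/
lemma M_in_range (Rng : Subalgebra ℚ R) (hQ : ∀ a : AtomCIdx, Qel M a ∈ Rng) :
    ∀ (d N : ℕ) (Γ : List (Finset ℕ)), IsSetComposition N Γ →
      N * (N ^ 2 + 1) + N ^ 2 + 1 - rk N Γ ≤ d → M N Γ ∈ Rng := by
  intro d
  induction d with
  | zero =>
    intro N Γ hΓ hd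
    have := rk_le hΓ
    omega
  | succ d ih =>
    intro N Γ hΓ hd
    obtain ⟨L, hLatom, hLeq⟩ := exists_factorization N Γ hΓ
    set w : List AtomCIdx := L.attach.map (fun p => ⟨p.1, hLatom p.1 p.2⟩) with hw
    have hmap : w.map Subtype.val = L := by
      rw [hw, List.map_map]
      exact List.attach_map_subtype_val L
    have hNW : NW w = N := by unfold NW; rw [hmap, hLeq]
    have hCW : CW w = Γ := by unfold CW; rw [hmap, hLeq]
    have hPw : Pw M w ∈ Rng := by
      apply list_prod_mem
      intro x hx
      obtain ⟨a, _, rfl⟩ := List.mem_map.1 hx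
      exact hQ a
    have hE := main_expansion M hmul hone w
    rw [hNW, hCW] at hE
    have hTail : Tail M N Γ ≤ Subalgebra.toSubmodule Rng := by
      apply Submodule.span_le.2
      rintro x ⟨Γ', hΓ', hlt, rfl⟩
      have hrk := ltR_rk hΓ hΓ' hlt
      exact ih N Γ' hΓ' (by omega)
    have hmem : Pw M w - M N Γ ∈ Rng := hTail hE
    have : M N Γ = Pw M w - (Pw M w - M N Γ) := by abel
    rw [this]
    exact sub_mem hPw hmem

end Alg2

end NCQ

namespace NCQ

lemma symm_single_eq_prod (w : List AtomCIdx) :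
    (FreeAlgebra.equivMonoidAlgebraFreeMonoid (R := ℚ) (X := AtomCIdx)).symm
      (MonoidAlgebra.single (FreeMonoid.ofList w) (1 : ℚ)) =
      (w.map (FreeAlgebra.ι ℚ)).prod := by
  induction w with
  | nil =>
    rw [FreeMonoid.ofList_nil, show (MonoidAlgebra.single (1 : FreeMonoid AtomCIdx) (1 : ℚ)) =
      (1 : MonoidAlgebra ℚ (FreeMonoid AtomCIdx)) from rfl, map_one]
    rfl
  | cons a t ih =>
    have h2 : MonoidAlgebra.single (FreeMonoid.ofList (a :: t)) (1 : ℚ)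
        = MonoidAlgebra.single (FreeMonoid.of a) 1 *
            MonoidAlgebra.single (FreeMonoid.ofList t) 1 := by
      rw [MonoidAlgebra.single_mul_single, one_mul, FreeMonoid.ofList_cons]
    rw [h2, map_mul, ih, List.map_cons, List.prod_cons]
    congr 1
    have h3 : (FreeAlgebra.equivMonoidAlgebraFreeMonoid (R := ℚ) (X := AtomCIdx))
        (FreeAlgebra.ι ℚ a) = MonoidAlgebra.single (FreeMonoid.of a) (1 : ℚ) := by
      show (FreeAlgebra.lift ℚ fun x : AtomCIdx =>
        (MonoidAlgebra.of ℚ (FreeMonoid AtomCIdx)) (FreeMonoid.of x)) (FreeAlgebra.ι ℚ a) = _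
      rw [FreeAlgebra.lift_ι_apply, MonoidAlgebra.of_apply]
    rw [← h3, AlgEquiv.symm_apply_apply]

lemma bF_apply (w : List AtomCIdx) :
    FreeAlgebra.basisFreeMonoid ℚ AtomCIdx (FreeMonoid.ofList w) =
      (w.map (FreeAlgebra.ι ℚ)).prod := by
  unfold FreeAlgebra.basisFreeMonoid
  rw [Module.Basis.map_apply]
  have h1 : (Finsupp.basisSingleOne (R := ℚ) (ι := FreeMonoid AtomCIdx)) (FreeMonoid.ofList w)
      = Finsupp.single (FreeMonoid.ofList w) 1 := by
    rw [Finsupp.coe_basisSingleOne]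
  rw [h1]
  exact symm_single_eq_prod w

end NCQ

/-- `NCQSym` (any algebra with basis `M_Φ` indexed by set compositions
satisfying the monomial product rule) is freely generated by the elements
`Q_Φ = ∑_{Φ' ≥_* Φ} M_{Φ'}` with `Φ` an atomic set composition. -/
theorem ncqsym_free {R : Type*} [Ring R] [Algebra ℚ R]
    (M : ℕ → List (Finset ℕ) → R)
    (hone : M 0 [] = 1)
    (hmul : ∀ n m Φ Ψ, IsSetComposition n Φ → IsSetComposition m Ψ →
      M n Φ * M m Ψ =
        ∑ Γ ∈ SCs (n + m)
            (fun Γ => meetC Γ (concatC n (onePartC n) (onePartC m)) = concatC n Φ Ψ),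
          M (n + m) Γ)
    (hli : LinearIndependent ℚ (fun i : SCIdx => M i.1.1 i.1.2))
    (hspan : Submodule.span ℚ (Set.range fun i : SCIdx => M i.1.1 i.1.2) = ⊤) :
    Function.Bijective
      ⇑(FreeAlgebra.lift ℚ
        (fun a : AtomCIdx => ∑ Φ' ∈ SCs a.1.1 (fun Φ' => leStarC a.1.2 Φ'), M a.1.1 Φ') :
          FreeAlgebra ℚ AtomCIdx →ₐ[ℚ] R) := by
  classical
  set F : FreeAlgebra ℚ AtomCIdx →ₐ[ℚ] R :=
    FreeAlgebra.lift ℚ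
      (fun a : AtomCIdx => ∑ Φ' ∈ SCs a.1.1 (fun Φ' => leStarC a.1.2 Φ'), M a.1.1 Φ') with hF
  have hQel : ∀ a : AtomCIdx, F (FreeAlgebra.ι ℚ a) = NCQ.Qel M a := fun a => by
    rw [hF, FreeAlgebra.lift_ι_apply]
    rfl
  have hFb : ∀ w : List AtomCIdx,
      F (FreeAlgebra.basisFreeMonoid ℚ AtomCIdx (FreeMonoid.ofList w)) = NCQ.Pw M w := by
    intro w
    rw [NCQ.bF_apply, map_list_prod, List.map_map]
    unfold NCQ.Pw
    congr 1
    apply List.map_congr_left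
    intro a _
    exact hQel a
  constructor
  · -- injectivity
    have hker : ∀ x : FreeAlgebra ℚ AtomCIdx, F x = 0 → x = 0 := by
      intro x hx
      set bF := FreeAlgebra.basisFreeMonoid ℚ AtomCIdx with hbF
      have hrepr := Module.Basis.linearCombination_repr bF x
      rw [Finsupp.linearCombination_apply, Finsupp.sum] at hrepr
      have hFx : ∑ w ∈ (bF.repr x).support, (bF.repr x) w • NCQ.Pw M w = 0 := by
        rw [← hx]
        conv_rhs => rw [← hrepr]
        rw [map_sum]
        apply Finset.sum_congr rfl
        intro w _
        rw [map_smul]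
        congr 1
        have := hFb (FreeMonoid.toList w)
        rw [show FreeMonoid.ofList (FreeMonoid.toList w) = w from rfl] at this
        exact this.symm
      have hzero := NCQ.pw_indep M hli hspan hone hmul
        ((bF.repr x).support) (fun w => (bF.repr x) w) hFx
      have hsupp : (bF.repr x).support = ∅ := by
        by_contra h
        obtain ⟨w, hw⟩ := Finset.nonempty_iff_ne_empty.2 h
        exact (Finsupp.mem_support_iff.1 hw) (hzero w hw)
      have hrepr0 : bF.repr x = 0 := Finsupp.support_eq_empty.1 hsupp
      have hx0 := congrArg bF.repr.symm hrepr0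
      rw [LinearEquiv.symm_apply_apply, map_zero] at hx0
      exact hx0
    intro x y hxy
    have hsub := hker (x - y) (by rw [map_sub, hxy, sub_self])
    exact sub_eq_zero.1 hsub
  · -- surjectivity
    intro r
    have hr : r ∈ Subalgebra.toSubmodule F.range := by
      have htop : (⊤ : Submodule ℚ R) ≤ Subalgebra.toSubmodule F.range := by
        rw [← hspan]
        apply Submodule.span_le.2
        rintro x ⟨i, rfl⟩
        have := NCQ.M_in_range M hone hmul F.range
          (fun a => ⟨FreeAlgebra.ι ℚ a, hQel a⟩)
          (i.1.1 * (i.1.1 ^ 2 + 1) + i.1.1 ^ 2 + 1) i.1.1 i.1.2 i.2 (Nat.sub_le _ _)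
        exact this
      exact htop Submodule.mem_top
    obtain ⟨x, hx⟩ := hr
    exact ⟨x, hx⟩

end
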